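/- Let (X, ≼, △) be a partially ordered semigroup with (X, ≼) having the property that every nonempty subset considered is finite. On the set AC_X of finite antichains of X, define S₁ ▽ S₂ = m(S₁ ∪ S₂) and S₁ ▵ S₂ = m({x₁ △ x₂ | x₁ ∈ S₁, x₂ ∈ S₂}), where m takes minimal elements. Then ▽ and ▵ are both commutative and associative, and ▵ distributes over ▽: S₁ ▵ (S₂ ▽ S₃) = (S₁ ▵ S₂) ▽ (S₁ ▵ S₃). -/

import Mathlib

lemma ac_exists_min {X : Type*} [PartialOrder X] {S : Set X} (hS : S.Finite) {x : X}
    (hx : x ∈ S) : ∃ y ∈ S, y ≤ x ∧ ∀ z ∈ S, ¬ z < y := by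
  obtain ⟨a, ha, hmin⟩ : ∃ a ∈ {y ∈ S | y ≤ x}, ∀ a' ∈ {y ∈ S | y ≤ x}, id a' ≤ id a → id a = id a' := by
    obtain ⟨a, ha⟩ := Set.Finite.exists_minimal
      (hS.subset (Set.sep_subset _ _)) (⟨x, hx, le_refl x⟩ : ({y ∈ S | y ≤ x} : Set X).Nonempty)
    exact ⟨a, ha.1, fun a' h h' => le_antisymm (ha.2 h h') h'⟩
  refine ⟨a, ha.1, ha.2, fun z hz hlt => ?_⟩
  have : z ∈ {y ∈ S | y ≤ x} := ⟨hz, le_trans hlt.le ha.2⟩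
  exact absurd (hmin z this hlt.le) (ne_of_gt hlt)

lemma ac_m_sub {X : Type*} [PartialOrder X] (m : Set X → Set X)
    (hm : ∀ S : Set X, m S = {x | x ∈ S ∧ ∀ x' ∈ S, ¬ x' < x})
    {A B : Set X} (hAB : ∀ x ∈ A, ∃ y ∈ B, y ≤ x) (hBA : ∀ y ∈ B, ∃ x ∈ A, x ≤ y) :
    m A ⊆ m B := by
  intro x hx
  rw [hm] at hx ⊢
  obtain ⟨hxA, hxmin⟩ := hx
  obtain ⟨y, hyB, hyx⟩ := hAB x hxA
  obtain ⟨z, hzA, hzy⟩ := hBA y hyB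
  have hzx : z ≤ x := le_trans hzy hyx
  have hz : z = x := le_antisymm hzx (by
    by_contra h
    exact hxmin z hzA (lt_of_le_of_ne hzx (fun e => h (e ▸ le_refl x))))
  have hyx' : y = x := le_antisymm hyx (hz ▸ hzy)
  refine ⟨hyx' ▸ hyB, fun y' hy' hlt => ?_⟩
  obtain ⟨z', hz'A, hz'y'⟩ := hBA y' hy'
  exact hxmin z' hz'A (lt_of_le_of_lt hz'y' hlt)

lemma ac_m_eq {X : Type*} [PartialOrder X] (m : Set X → Set X)
    (hm : ∀ S : Set X, m S = {x | x ∈ S ∧ ∀ x' ∈ S, ¬ x' < x})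
    {A B : Set X} (hAB : ∀ x ∈ A, ∃ y ∈ B, y ≤ x) (hBA : ∀ y ∈ B, ∃ x ∈ A, x ≤ y) :
    m A = m B :=
  Set.Subset.antisymm (ac_m_sub m hm hAB hBA) (ac_m_sub m hm hBA hAB)

/-- On finite antichains of a partially ordered semigroup,
the operations `S₁ ▽ S₂ = m (S₁ ∪ S₂)` and
`S₁ ▵ S₂ = m {x₁ △ x₂ | x₁ ∈ S₁, x₂ ∈ S₂}` are commutative and associative,
and `▵` distributes over `▽`. -/
theorem antichain_semiring {X : Type*} [PartialOrder X] (op : X → X → X)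
    (hcomm : ∀ x y, op x y = op y x)
    (hassoc : ∀ x y z, op (op x y) z = op x (op y z))
    (hmono : ∀ x y z, x ≤ y → op x z ≤ op y z)
    (m : Set X → Set X)
    (hm : ∀ S : Set X, m S = {x | x ∈ S ∧ ∀ x' ∈ S, ¬ x' < x})
    (S₁ S₂ S₃ : Set X)
    (h₁ : S₁.Finite) (h₂ : S₂.Finite) (h₃ : S₃.Finite)
    (ha₁ : IsAntichain (· ≤ ·) S₁) (ha₂ : IsAntichain (· ≤ ·) S₂)
    (ha₃ : IsAntichain (· ≤ ·) S₃) :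
    (m (S₁ ∪ S₂) = m (S₂ ∪ S₁)) ∧
    (m (m (S₁ ∪ S₂) ∪ S₃) = m (S₁ ∪ m (S₂ ∪ S₃))) ∧
    (m (Set.image2 op S₁ S₂) = m (Set.image2 op S₂ S₁)) ∧
    (m (Set.image2 op (m (Set.image2 op S₁ S₂)) S₃)
      = m (Set.image2 op S₁ (m (Set.image2 op S₂ S₃)))) ∧
    (m (Set.image2 op S₁ (m (S₂ ∪ S₃)))
      = m (m (Set.image2 op S₁ S₂) ∪ m (Set.image2 op S₁ S₃))) := by
  -- m S ⊆ S
  have msub : ∀ S : Set X, m S ⊆ S := fun S => by rw [hm]; exact fun x hx => hx.1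
  -- coinitiality of m S in S for finite S
  have mco : ∀ S : Set X, S.Finite → ∀ x ∈ S, ∃ y ∈ m S, y ≤ x := by
    intro S hS x hx
    obtain ⟨y, hyS, hyx, hymin⟩ := ac_exists_min hS hx
    exact ⟨y, by rw [hm]; exact ⟨hyS, hymin⟩, hyx⟩
  -- m (m A ∪ B) = m (A ∪ B) for finite A
  have key : ∀ A B : Set X, A.Finite → m (m A ∪ B) = m (A ∪ B) := by
    intro A B hA
    refine ac_m_eq m hm ?_ ?_
    · rintro x (hx | hx)
      · exact ⟨x, Or.inl (msub A hx), le_refl x⟩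
      · exact ⟨x, Or.inr hx, le_refl x⟩
    · rintro x (hx | hx)
      · obtain ⟨y, hy, hyx⟩ := mco A hA x hx
        exact ⟨y, Or.inl hy, hyx⟩
      · exact ⟨x, Or.inr hx, le_refl x⟩
  have hmono' : ∀ x y z, x ≤ y → op z x ≤ op z y := by
    intro x y z h; rw [hcomm z x, hcomm z y]; exact hmono x y z h
  -- m (image2 op (m A) B) = m (image2 op A B) for finite A
  have keyL : ∀ A B : Set X, A.Finite → m (Set.image2 op (m A) B) = m (Set.image2 op A B) := by
    intro A B hA
    refine ac_m_eq m hm ?_ ?_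
    · rintro _ ⟨a, ha, b, hb, rfl⟩
      exact ⟨op a b, Set.mem_image2_of_mem (msub A ha) hb, le_refl _⟩
    · rintro _ ⟨a, ha, b, hb, rfl⟩
      obtain ⟨a', ha', haa⟩ := mco A hA a ha
      exact ⟨op a' b, Set.mem_image2_of_mem ha' hb, hmono _ _ _ haa⟩
  have keyR : ∀ A B : Set X, B.Finite → m (Set.image2 op A (m B)) = m (Set.image2 op A B) := by
    intro A B hB
    refine ac_m_eq m hm ?_ ?_
    · rintro _ ⟨a, ha, b, hb, rfl⟩
      exact ⟨op a b, Set.mem_image2_of_mem ha (msub B hb), le_refl _⟩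
    · rintro _ ⟨a, ha, b, hb, rfl⟩
      obtain ⟨b', hb', hbb⟩ := mco B hB b hb
      exact ⟨op a b', Set.mem_image2_of_mem ha hb', hmono' _ _ _ hbb⟩
  refine ⟨by rw [Set.union_comm], ?_, ?_, ?_, ?_⟩
  · rw [key _ _ (h₁.union h₂), Set.union_comm S₁ (m (S₂ ∪ S₃)), key _ _ (h₂.union h₃),
      Set.union_comm (S₂ ∪ S₃) S₁, Set.union_assoc]
  · rw [Set.image2_comm hcomm]
  · rw [keyL _ _ (Set.Finite.image2 _ h₁ h₂), keyR _ _ (Set.Finite.image2 _ h₂ h₃),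
      Set.image2_assoc hassoc]
  · rw [keyR _ _ (h₂.union h₃), Set.image2_union_right,
      key _ _ (Set.Finite.image2 _ h₁ h₂)]
    conv_rhs => rw [Set.union_comm]
    rw [key _ _ (Set.Finite.image2 _ h₁ h₃), Set.union_comm]
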